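/- For every rational number d, d times the coefficient of z in the power series H(z)^4·H(d²z)^{-1} equals −d(d²−4)/3, where H(z) = C(z)/S(z) with C(z) = Σ z^k/(2k)! and S(z) = Σ z^k/(2k+1)!. -/

import Mathlib

open PowerSeries

noncomputable def Cser : PowerSeries ℚ := PowerSeries.mk fun k => 1 / (2 * k).factorial

noncomputable def Sser : PowerSeries ℚ := PowerSeries.mk fun k => 1 / (2 * k + 1).factorial

noncomputable def Hser : PowerSeries ℚ := Cser * Sser⁻¹

lemma anti1 : Finset.HasAntidiagonal.antidiagonal (1:ℕ) = {(0,1),(1,0)} := by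
  rw [Finset.Nat.antidiagonal_succ]; rfl

lemma coeff1_mul (a b : PowerSeries ℚ) : coeff 1 (a * b) =
    constantCoeff a * coeff 1 b + coeff 1 a * constantCoeff b := by
  rw [coeff_mul, anti1]
  simp [coeff_zero_eq_constantCoeff]

lemma coeff1_inv (a : PowerSeries ℚ) (h : constantCoeff a = 1) :
    coeff 1 a⁻¹ = - coeff 1 a := by
  have h2 : a * a⁻¹ = 1 := PowerSeries.mul_inv_cancel _ (by simp [h])
  have h3 := congrArg (coeff 1) h2
  rw [coeff1_mul, h, constantCoeff_inv, h] at h3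
  simp at h3
  linarith

lemma c0S : constantCoeff Sser = 1 := by
  simp [Sser, ← coeff_zero_eq_constantCoeff]
lemma c0C : constantCoeff Cser = 1 := by
  simp [Cser, ← coeff_zero_eq_constantCoeff]
lemma c1S : coeff 1 Sser = 1/6 := by
  simp [Sser]; norm_num [Nat.factorial]
lemma c1C : coeff 1 Cser = 1/2 := by
  simp [Cser]

lemma c0H : constantCoeff Hser = 1 := by
  simp [Hser, constantCoeff_inv, c0S, c0C]
lemma c1H : coeff 1 Hser = 1/3 := by
  rw [Hser, coeff1_mul, c0C, c1C, coeff1_inv _ c0S, c1S, constantCoeff_inv, c0S]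
  norm_num

theorem signature_surface_in_P3 (d : ℚ) :
    d * coeff 1 (Hser ^ 4 * (PowerSeries.rescale (d ^ 2) Hser)⁻¹)
      = -(d * (d ^ 2 - 4)) / 3 := by
  have c0R : constantCoeff (PowerSeries.rescale (d ^ 2) Hser) = 1 := by
    rw [← coeff_zero_eq_constantCoeff, coeff_rescale, pow_zero, one_mul,
      coeff_zero_eq_constantCoeff, c0H]
  have c1R : coeff 1 (PowerSeries.rescale (d ^ 2) Hser) = d^2/3 := by
    rw [coeff_rescale, c1H]; ring
  have c0H2 : constantCoeff (Hser ^ 2) = 1 := by rw [map_pow, c0H]; norm_num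
  have c1H2 : coeff 1 (Hser ^ 2) = 2/3 := by
    rw [pow_two, coeff1_mul, c0H, c1H]; norm_num
  have c1H4 : coeff 1 (Hser ^ 4) = 4/3 := by
    have : Hser ^ 4 = Hser ^ 2 * Hser ^ 2 := by ring
    rw [this, coeff1_mul, c0H2, c1H2]; norm_num
  rw [coeff1_mul, map_pow, c0H, coeff1_inv _ c0R, c1R, c1H4, constantCoeff_inv, c0R]
  ring
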